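/- arXiv:1407.4097 — 3 statements merged into one kernel-verified Lean document; each statement's English description precedes it below -/
import Mathlib

section
/- Let μ be a nontrivial symmetric weakly stable probability measure on ℝ, let λ be μ-weakly infinitely divisible, let {λ^r : r ≥ 0} be a convolution semigroup family for (μ,λ), and let t_n ↘ 0. Then the sequence of finite measures (t_n^{−1} λ^{t_n}) is tight outside every open neighborhood of zero: for every ε > 0 there exists k > 0 such that t_n^{−1} λ^{t_n}({s : |s| > k}) < ε for all n. -/
open MeasureTheory Filter Topology ENNReal BoundedContinuousFunction

noncomputable section

/-- `T_c μ`: pushforward of `μ` under `x ↦ c * x`. -/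
def rescale (c : ℝ) (μ : Measure ℝ) : Measure ℝ := μ.map (fun x => c * x)

/-- Scale mixture `μ ∘ ν`: pushforward of `μ × ν` under `(x, s) ↦ x * s`. -/
def mix (μ ν : Measure ℝ) : Measure ℝ := (μ.prod ν).map (fun p => p.1 * p.2)

/-- Convolution of two measures on `ℝ`. -/
def mconv (μ ν : Measure ℝ) : Measure ℝ := (μ.prod ν).map (fun p => p.1 + p.2)

/-- `n`-fold convolution power, with the convention that the 0th power is `δ_0`. -/
def convPow (μ : Measure ℝ) : ℕ → Measure ℝ
  | 0 => Measure.dirac 0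
  | n + 1 => mconv (convPow μ n) μ

/-- A probability measure `μ` on `ℝ` is weakly stable if for all `a b : ℝ` there is a
probability measure `lam` with `(T_a μ) ∗ (T_b μ) = μ ∘ lam`. -/
def WeaklyStable (μ : Measure ℝ) : Prop :=
  ∀ a b : ℝ, ∃ lam : Measure ℝ, IsProbabilityMeasure lam ∧
    mconv (rescale a μ) (rescale b μ) = mix μ lam

/-- `μ` is nontrivial: it has no atoms. -/
def NontrivialMeasure (μ : Measure ℝ) : Prop := ∀ x : ℝ, μ {x} = 0

/-- `μ` is symmetric: `T_{-1} μ = μ`. -/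
def SymmetricMeasure (μ : Measure ℝ) : Prop := rescale (-1) μ = μ

/-- `lam` is `μ`-weakly infinitely divisible: for every `n ≥ 1` there is a probability
measure `ν` concentrated on `[0, ∞)` with `(μ ∘ ν)^{∗ n} = μ ∘ lam`. -/
def MuWeaklyInfDiv (μ lam : Measure ℝ) : Prop :=
  ∀ n : ℕ, 1 ≤ n → ∃ ν : Measure ℝ, IsProbabilityMeasure ν ∧ ν (Set.Iio 0) = 0 ∧
    convPow (mix μ ν) n = mix μ lam

/-- Characteristic function of a measure on `ℝ`. -/
def charFun' (μ : Measure ℝ) (t : ℝ) : ℂ := ∫ x, Complex.exp (t * x * Complex.I) ∂μ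

/-- Weak convergence of a sequence of measures on `ℝ`. -/
def WeakTendsto (μs : ℕ → Measure ℝ) (μ : Measure ℝ) : Prop :=
  ∀ f : ℝ →ᵇ ℝ, Tendsto (fun n => ∫ x, f x ∂(μs n)) atTop (𝓝 (∫ x, f x ∂μ))

/-- A convolution semigroup family for `(μ, lam)`. -/
def ConvSemigroupFamily (μ lam : Measure ℝ) (L : ℝ → Measure ℝ) : Prop :=
  (∀ r : ℝ, 0 ≤ r → IsProbabilityMeasure (L r)) ∧
  L 0 = Measure.dirac 0 ∧ L 1 = lam ∧
  (∀ r s : ℝ, 0 ≤ r → 0 ≤ s → mconv (mix μ (L r)) (mix μ (L s)) = mix μ (L (r + s))) ∧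
  (∀ f : ℝ →ᵇ ℝ, Tendsto (fun r => ∫ x, f x ∂(L r)) (𝓝[>] (0 : ℝ)) (𝓝 (f 0)))

/-- `C_#`: bounded continuous functions vanishing on a neighborhood of `0`. -/
def CSharp (f : ℝ →ᵇ ℝ) : Prop := ∃ ε > (0 : ℝ), ∀ x : ℝ, |x| < ε → f x = 0

/-- `κ(μ) = sup {p ∈ [0,2] : ∫ |x|^p μ(dx) < ∞}` (with `sup ∅ = 0` in `ℝ`). -/
def kappa (μ : Measure ℝ) : ℝ :=
  sSup {p : ℝ | p ∈ Set.Icc (0 : ℝ) 2 ∧ ∫⁻ x, ENNReal.ofReal (|x| ^ p) ∂μ < ∞}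

-- helpers
lemma st12_m_mul : Measurable fun p : ℝ × ℝ => p.1 * p.2 := measurable_fst.mul measurable_snd
lemma st12_m_add : Measurable fun p : ℝ × ℝ => p.1 + p.2 := measurable_fst.add measurable_snd

lemma st12_ms_tail (K : ℝ) : MeasurableSet {y : ℝ | K ≤ |y|} :=
  measurableSet_le measurable_const measurable_abs

lemma st12_mix_prob (μ ν : Measure ℝ) [IsProbabilityMeasure μ] [IsProbabilityMeasure ν] :
    IsProbabilityMeasure (mix μ ν) :=
  Measure.isProbabilityMeasure_map st12_m_mul.aemeasurable

lemma st12_mconv_prob (μ ν : Measure ℝ) [IsProbabilityMeasure μ] [IsProbabilityMeasure ν] :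
    IsProbabilityMeasure (mconv μ ν) :=
  Measure.isProbabilityMeasure_map st12_m_add.aemeasurable

lemma st12_convPow_prob (ν : Measure ℝ) [IsProbabilityMeasure ν] (n : ℕ) :
    IsProbabilityMeasure (convPow ν n) := by
  induction n with
  | zero => rw [convPow]; infer_instance
  | succ n ih => rw [convPow]; exact st12_mconv_prob _ _

lemma st12_mix_symm {μ ρ : Measure ℝ} [SFinite μ] [SFinite ρ]
    (hμ : μ.map (fun x : ℝ => -x) = μ) :
    (mix μ ρ).map (fun x : ℝ => -x) = mix μ ρ := by
  unfold mix
  rw [Measure.map_map measurable_neg st12_m_mul]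
  have h1 : ((fun x : ℝ => -x) ∘ fun p : ℝ × ℝ => p.1 * p.2)
      = (fun p : ℝ × ℝ => p.1 * p.2) ∘ (Prod.map (fun x : ℝ => -x) id) := by
    ext p; simp [Prod.map]
  rw [h1, ← Measure.map_map st12_m_mul (Measurable.prodMap measurable_neg measurable_id),
    ← Measure.map_prod_map _ _ measurable_neg measurable_id, hμ, Measure.map_id]

lemma st12_sym_half {ν : Measure ℝ} (hν : ν.map (fun y : ℝ => -y) = ν)
    {P : ℝ → Prop} (hP : MeasurableSet {y | P y}) (hPsym : ∀ y, P y → P (-y)) (a : ℝ) :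
    ν {y | P y} ≤ 2 * ν {y | P y ∧ 0 ≤ a * y} := by
  have hBm : MeasurableSet {y | P y ∧ 0 ≤ a * y} :=
    hP.inter (measurableSet_le measurable_const (measurable_id.const_mul a))
  have hneg : ν ((fun y : ℝ => -y) ⁻¹' {y | P y ∧ 0 ≤ a * y}) = ν {y | P y ∧ 0 ≤ a * y} := by
    conv_rhs => rw [← hν]
    rw [Measure.map_apply measurable_neg hBm]
  have hsub : {y | P y} ⊆ {y | P y ∧ 0 ≤ a * y} ∪ ((fun y : ℝ => -y) ⁻¹' {y | P y ∧ 0 ≤ a * y}) := by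
    intro y hy
    rcases le_total 0 (a * y) with h | h
    · exact Or.inl ⟨hy, h⟩
    · refine Or.inr ?_
      simp only [Set.mem_preimage, Set.mem_setOf_eq]
      exact ⟨hPsym y hy, by nlinarith⟩
  calc ν {y | P y} ≤ ν _ := measure_mono hsub
    _ ≤ ν {y | P y ∧ 0 ≤ a * y} + ν ((fun y : ℝ => -y) ⁻¹' {y | P y ∧ 0 ≤ a * y}) :=
        measure_union_le _ _
    _ = 2 * ν {y | P y ∧ 0 ≤ a * y} := by rw [hneg, two_mul]

lemma st12_abs_le_abs_add {a b : ℝ} (h : 0 ≤ a * b) : |b| ≤ |a + b| := by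
  rw [← sq_le_sq]; nlinarith [sq_nonneg a]

lemma st12_lemA {ν : Measure ℝ} [IsProbabilityMeasure ν] (hν : ν.map (fun y : ℝ => -y) = ν)
    (K : ℝ) (n : ℕ) (x : ℝ) :
    1 - (1 - ν {y | K ≤ |y|}) ^ n ≤ 2 * (convPow ν n) {s | K ≤ |x + s|} := by
  induction n generalizing x with
  | zero => simp
  | succ n ih =>
    set p := ν {y | K ≤ |y|} with hp
    haveI := st12_convPow_prob ν n
    set Pn := convPow ν n with hPn
    set E1 := {q : ℝ × ℝ | K ≤ |q.2| ∧ 0 ≤ (x + q.1) * q.2} with hE1def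
    set E2 := {q : ℝ × ℝ | |q.2| < K ∧ K ≤ |x + (q.1 + q.2)|} with hE2def
    have hE1m : MeasurableSet E1 :=
      (measurableSet_le measurable_const measurable_snd.abs).inter
        (measurableSet_le measurable_const
          ((measurable_const.add measurable_fst).mul measurable_snd))
    have hE2m : MeasurableSet E2 :=
      (measurableSet_lt measurable_snd.abs measurable_const).inter
        (measurableSet_le measurable_const
          ((measurable_const.add (measurable_fst.add measurable_snd)).abs))
    -- E1 bound
    have hE1 : p ≤ 2 * (Pn.prod ν) E1 := by
      rw [Measure.prod_apply hE1m, ← lintegral_const_mul' 2 _ ENNReal.ofNat_ne_top]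
      calc p = ∫⁻ _, p ∂Pn := by rw [lintegral_const, measure_univ, mul_one]
        _ ≤ ∫⁻ s, 2 * ν (Prod.mk s ⁻¹' E1) ∂Pn := by
            refine lintegral_mono fun s => ?_
            have h := st12_sym_half hν (P := fun y => K ≤ |y|) (st12_ms_tail K)
              (fun y hy => by show K ≤ |(-y)|; rwa [abs_neg]) (x + s)
            exact h
    -- E2 bound
    have hE2 : (1 - (1 - p) ^ n) * ν {y : ℝ | |y| < K} ≤ 2 * (Pn.prod ν) E2 := by
      rw [Measure.prod_apply_symm hE2m, ← lintegral_const_mul' 2 _ ENNReal.ofNat_ne_top]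
      rw [← lintegral_indicator_const (measurableSet_lt measurable_abs measurable_const)
        (1 - (1 - p) ^ n)]
      refine lintegral_mono fun y => ?_
      by_cases hy : |y| < K
      · have hy' : y ∈ {a : ℝ | |a| < K} := hy
        rw [Set.indicator_of_mem hy']
        have hset : ((fun s : ℝ => (s, y)) ⁻¹' E2) = {s : ℝ | K ≤ |(x + y) + s|} := by
          ext s
          simp only [hE2def, Set.mem_preimage, Set.mem_setOf_eq, hy, true_and]
          constructor <;> intro h <;> [skip; skip] <;>
            · convert h using 2; ring
        rw [hset]
        exact ih (x + y)
      · have hy' : y ∉ {a : ℝ | |a| < K} := hy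
        rw [Set.indicator_of_notMem hy']
        exact zero_le
    -- union
    have hdisj : Disjoint E1 E2 := by
      rw [Set.disjoint_left]
      rintro ⟨s, y⟩ h1 h2
      exact absurd h1.1 (not_le.2 h2.1)
    have hkey : (Pn.prod ν) E1 + (Pn.prod ν) E2
        ≤ (Pn.prod ν) {q : ℝ × ℝ | K ≤ |x + (q.1 + q.2)|} := by
      rw [← measure_union hdisj hE2m]
      refine measure_mono ?_
      rintro ⟨s, y⟩ (⟨h1, h2⟩ | ⟨h1, h2⟩)
      · have h3 : |y| ≤ |(x + s) + y| := st12_abs_le_abs_add h2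
        have h4 : K ≤ |(x + s) + y| := le_trans h1 h3
        show K ≤ |x + (s + y)|
        convert h4 using 2; ring
      · exact h2
    -- complement
    have hcompl : ν {y : ℝ | |y| < K} = 1 - p := by
      have hu : {y : ℝ | |y| < K} = {y : ℝ | K ≤ |y|}ᶜ := by ext y; simp [not_le]
      rw [hu, measure_compl (st12_ms_tail K) (measure_ne_top _ _), measure_univ]
    -- assemble
    have hqle : (1 - p : ℝ≥0∞) ^ n ≤ 1 := pow_le_one' tsub_le_self n
    have hple : p ≤ 1 := prob_le_one
    rw [tsub_le_iff_right]
    have hsum : p + (1 - (1 - p) ^ n) * (1 - p) ≤ 2 * (convPow ν (n + 1)) {s | K ≤ |x + s|} := by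
      have hSm : MeasurableSet {s : ℝ | K ≤ |x + s|} :=
        measurableSet_le measurable_const ((measurable_const.add measurable_id).abs)
      have hmap : (convPow ν (n + 1)) {s | K ≤ |x + s|}
          = (Pn.prod ν) {q : ℝ × ℝ | K ≤ |x + (q.1 + q.2)|} := by
        show (mconv Pn ν) _ = _
        unfold mconv
        rw [Measure.map_apply st12_m_add hSm]
        rfl
      rw [hmap]
      calc p + (1 - (1 - p) ^ n) * (1 - p)
          ≤ 2 * (Pn.prod ν) E1 + 2 * (Pn.prod ν) E2 := by
            refine add_le_add hE1 ?_
            rw [hcompl] at hE2; exact hE2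
        _ = 2 * ((Pn.prod ν) E1 + (Pn.prod ν) E2) := by ring
        _ ≤ 2 * (Pn.prod ν) {q : ℝ × ℝ | K ≤ |x + (q.1 + q.2)|} := by
            exact mul_le_mul_right hkey 2
    refine le_trans (le_of_eq ?_) (add_le_add_left hsum ((1 - p) ^ (n + 1)))
    have hq1 : (1 - p : ℝ≥0∞) ≠ ∞ := ENNReal.sub_ne_top ENNReal.one_ne_top
    have hpow : (1 - p : ℝ≥0∞) ^ (n + 1) ≤ (1 - p) := by
      calc (1 - p : ℝ≥0∞) ^ (n + 1) = (1 - p) ^ n * (1 - p) := pow_succ _ _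
        _ ≤ 1 * (1 - p) := mul_le_mul_left hqle _
        _ = (1 - p) := one_mul _
    have h1 : (1 - (1 - p) ^ n) * (1 - p) + (1 - p) ^ (n + 1) = 1 - p := by
      rw [ENNReal.sub_mul (fun _ _ => hq1), one_mul, pow_succ]
      exact tsub_add_cancel_of_le (by rw [← pow_succ]; exact hpow)
    calc (1 : ℝ≥0∞) = p + (1 - p) := (add_tsub_cancel_of_le hple).symm
      _ = p + ((1 - (1 - p) ^ n) * (1 - p) + (1 - p) ^ (n + 1)) := by rw [h1]
      _ = p + (1 - (1 - p) ^ n) * (1 - p) + (1 - p) ^ (n + 1) := by rw [add_assoc]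

lemma st12_lemB {α β : Measure ℝ} [IsProbabilityMeasure α] [IsProbabilityMeasure β]
    (hβ : β.map (fun y : ℝ => -y) = β) (K : ℝ) :
    α {y | K ≤ |y|} ≤ 2 * (mconv α β) {y | K ≤ |y|} := by
  unfold mconv
  rw [Measure.map_apply st12_m_add (st12_ms_tail K)]
  set E := {q : ℝ × ℝ | K ≤ |q.1| ∧ 0 ≤ q.1 * q.2} with hEdef
  have hEm : MeasurableSet E :=
    (measurableSet_le measurable_const measurable_fst.abs).inter
      (measurableSet_le measurable_const (measurable_fst.mul measurable_snd))
  have hsub : E ⊆ (fun p : ℝ × ℝ => p.1 + p.2) ⁻¹' {y | K ≤ |y|} := by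
    rintro ⟨s, y⟩ ⟨h1, h2⟩
    have h3 : |s| ≤ |y + s| := st12_abs_le_abs_add (by nlinarith)
    have h4 : |y + s| = |s + y| := by rw [add_comm]
    simp only [Set.mem_preimage, Set.mem_setOf_eq]
    rw [← h4] at *
    linarith
  refine le_trans ?_ (mul_le_mul_right (measure_mono hsub) 2)
  rw [Measure.prod_apply hEm, ← lintegral_const_mul' 2 _ ENNReal.ofNat_ne_top]
  rw [← one_mul (α {y | K ≤ |y|}), ← lintegral_indicator_const (st12_ms_tail K) 1]
  refine lintegral_mono fun s => ?_
  by_cases hs : K ≤ |s|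
  · have hs' : s ∈ {y : ℝ | K ≤ |y|} := hs
    rw [Set.indicator_of_mem hs']
    have h := st12_sym_half hβ (P := fun _ : ℝ => True) MeasurableSet.univ
      (fun _ _ => trivial) s
    have hset : (Prod.mk s ⁻¹' E) = {y : ℝ | True ∧ 0 ≤ s * y} := by
      ext y
      simp only [hEdef, Set.mem_preimage, Set.mem_setOf_eq, hs, true_and]
    rw [hset]
    calc (1 : ℝ≥0∞) = β {y : ℝ | True} := by simp
      _ ≤ 2 * β {y : ℝ | True ∧ 0 ≤ s * y} := h
  · have hs' : s ∉ {y : ℝ | K ≤ |y|} := hs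
    rw [Set.indicator_of_notMem hs']
    exact zero_le

lemma st12_conv_tail (α β : Measure ℝ) [IsProbabilityMeasure α] [IsProbabilityMeasure β]
    (K : ℝ) :
    (mconv α β) {y | 2 * K ≤ |y|} ≤ α {y | K ≤ |y|} + β {y | K ≤ |y|} := by
  unfold mconv
  rw [Measure.map_apply st12_m_add (st12_ms_tail (2 * K))]
  have hsub : (fun p : ℝ × ℝ => p.1 + p.2) ⁻¹' {y | 2 * K ≤ |y|} ⊆
      ({y : ℝ | K ≤ |y|} ×ˢ (Set.univ : Set ℝ)) ∪ ((Set.univ : Set ℝ) ×ˢ {y : ℝ | K ≤ |y|}) := by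
    rintro ⟨s, y⟩ h
    simp only [Set.mem_preimage, Set.mem_setOf_eq] at h
    rcases le_or_gt K |s| with hs | hs
    · exact Or.inl ⟨hs, Set.mem_univ _⟩
    · refine Or.inr ⟨Set.mem_univ _, ?_⟩
      have := abs_add_le s y
      simp only [Set.mem_setOf_eq]
      linarith
  calc (α.prod β) ((fun p : ℝ × ℝ => p.1 + p.2) ⁻¹' {y | 2 * K ≤ |y|})
      ≤ (α.prod β) _ := measure_mono hsub
    _ ≤ (α.prod β) ({y : ℝ | K ≤ |y|} ×ˢ (Set.univ : Set ℝ))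
        + (α.prod β) ((Set.univ : Set ℝ) ×ˢ {y : ℝ | K ≤ |y|}) := measure_union_le _ _
    _ = α {y | K ≤ |y|} + β {y | K ≤ |y|} := by
        rw [Measure.prod_prod, Measure.prod_prod, measure_univ, measure_univ, mul_one, one_mul]

lemma st12_mix_tail (μ ρ : Measure ℝ) [IsProbabilityMeasure μ] [IsProbabilityMeasure ρ]
    {δ k : ℝ} (hδ : 0 ≤ δ) (hk : 0 ≤ k) :
    μ {x | δ ≤ |x|} * ρ {s | k < |s|} ≤ (mix μ ρ) {y | δ * k ≤ |y|} := by
  unfold mix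
  rw [Measure.map_apply st12_m_mul (st12_ms_tail (δ * k))]
  calc μ {x | δ ≤ |x|} * ρ {s | k < |s|}
      = (μ.prod ρ) ({x : ℝ | δ ≤ |x|} ×ˢ {s : ℝ | k < |s|}) := (Measure.prod_prod _ _).symm
    _ ≤ (μ.prod ρ) ((fun p : ℝ × ℝ => p.1 * p.2) ⁻¹' {y | δ * k ≤ |y|}) := by
        refine measure_mono ?_
        rintro ⟨x, s⟩ ⟨hx, hsk⟩
        simp only [Set.mem_setOf_eq] at hx hsk
        simp only [Set.mem_preimage, Set.mem_setOf_eq, abs_mul]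
        exact mul_le_mul hx hsk.le hk (abs_nonneg _)

lemma st12_convPow_mix (μ : Measure ℝ) [IsProbabilityMeasure μ] (L : ℝ → Measure ℝ)
    (hL0 : L 0 = Measure.dirac 0)
    (hsg : ∀ r s : ℝ, 0 ≤ r → 0 ≤ s → mconv (mix μ (L r)) (mix μ (L s)) = mix μ (L (r + s)))
    {r : ℝ} (hr : 0 ≤ r) : ∀ m : ℕ, convPow (mix μ (L r)) m = mix μ (L ((m : ℝ) * r)) := by
  intro m
  induction m with
  | zero =>
    show Measure.dirac 0 = _
    rw [Nat.cast_zero, zero_mul, hL0]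
    unfold mix
    rw [Measure.prod_dirac, Measure.map_map st12_m_mul
      measurable_prodMk_right]
    have : ((fun p : ℝ × ℝ => p.1 * p.2) ∘ fun x : ℝ => (x, (0 : ℝ))) = fun _ : ℝ => (0 : ℝ) := by
      ext x; simp
    rw [this, Measure.map_const, measure_univ, one_smul]
  | succ m ih =>
    have hcast : ((m : ℝ) + 1) * r = (m : ℝ) * r + r := by ring
    show mconv (convPow (mix μ (L r)) m) (mix μ (L r)) = _
    rw [ih, hsg _ _ (by positivity) hr, Nat.cast_succ, hcast]

lemma st12_tail_tendsto (m : Measure ℝ) [IsFiniteMeasure m] :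
    Tendsto (fun j : ℕ => m {y : ℝ | (j : ℝ) ≤ |y|}) atTop (𝓝 0) := by
  have h := tendsto_measure_iInter_atTop (μ := m)
    (fun j : ℕ => (st12_ms_tail (j : ℝ)).nullMeasurableSet)
    (fun a b hab => by
      intro y hy
      simp only [Set.mem_setOf_eq] at *
      exact le_trans (by exact_mod_cast hab) hy)
    ⟨0, measure_ne_top m _⟩
  have hempty : ⋂ j : ℕ, {y : ℝ | (j : ℝ) ≤ |y|} = ∅ := by
    ext y
    simp only [Set.mem_iInter, Set.mem_setOf_eq, Set.mem_empty_iff_false, iff_false, not_forall,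
      not_le]
    obtain ⟨j, hj⟩ := exists_nat_gt |y|
    exact ⟨j, hj⟩
  rw [hempty, measure_empty] at h
  exact h

lemma st12_bern (n : ℕ) {x : ℝ} (h0 : 0 ≤ x) (h1 : x ≤ 1) :
    (n : ℝ) * x ^ n * (1 - x) ≤ 1 - x ^ n := by
  induction n with
  | zero => simp
  | succ n ih =>
    have hx1 : x ^ n * x ≤ 1 := by rw [← pow_succ]; exact pow_le_one₀ h0 h1
    have h2 : x * ((n : ℝ) * x ^ n * (1 - x)) ≤ x * (1 - x ^ n) :=
      mul_le_mul_of_nonneg_left ih h0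
    have h3 : x ^ n * x * (1 - x) ≤ 1 * (1 - x) :=
      mul_le_mul_of_nonneg_right hx1 (by linarith)
    push_cast
    rw [pow_succ]
    nlinarith [h2, h3]

set_option maxHeartbeats 1000000 in
theorem stmt12 (μ lam : Measure ℝ)
    (hμ : IsProbabilityMeasure μ) (hnt : NontrivialMeasure μ)
    (hsym : SymmetricMeasure μ) (hws : WeaklyStable μ)
    (hlam : IsProbabilityMeasure lam) (hdiv : MuWeaklyInfDiv μ lam)
    (L : ℝ → Measure ℝ) (hL : ConvSemigroupFamily μ lam L)
    (t : ℕ → ℝ) (htpos : ∀ n, 0 < t n) (htanti : StrictAnti t)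
    (ht0 : Tendsto t atTop (𝓝 0)) :
    ∀ ε : ℝ, 0 < ε → ∃ k : ℝ, 0 < k ∧ ∀ n : ℕ,
      (L (t n)) {s : ℝ | k < |s|} / ENNReal.ofReal (t n) < ENNReal.ofReal ε := by
  obtain ⟨hLprob, hL0, hL1, hLsg, _⟩ := hL
  haveI := hμ; haveI := hlam
  intro ε hε
  have hμneg : μ.map (fun x : ℝ => -x) = μ := by
    have h : (fun x : ℝ => -x) = fun x : ℝ => (-1 : ℝ) * x := by funext x; ring
    rw [h]; exact hsym
  have hμ0 : μ (({(0 : ℝ)} : Set ℝ)ᶜ) = 1 := by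
    rw [measure_compl (measurableSet_singleton 0) (measure_ne_top μ _), measure_univ, hnt 0,
      tsub_zero]
  obtain ⟨δ, hδpos, hδhalf⟩ : ∃ δ : ℝ, 0 < δ ∧ 1 ≤ 2 * μ {x | δ ≤ |x|} := by
    have hmono : Monotone fun m : ℕ => {x : ℝ | 1 / ((m : ℝ) + 1) ≤ |x|} := by
      intro a b hab x hx
      simp only [Set.mem_setOf_eq] at *
      refine le_trans ?_ hx
      apply one_div_le_one_div_of_le
      · positivity
      · have : (a : ℝ) ≤ (b : ℝ) := by exact_mod_cast hab
        linarith
    have hU : (⋃ m : ℕ, {x : ℝ | 1 / ((m : ℝ) + 1) ≤ |x|}) = ({(0 : ℝ)} : Set ℝ)ᶜ := by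
      ext x
      simp only [Set.mem_iUnion, Set.mem_setOf_eq, Set.mem_compl_iff, Set.mem_singleton_iff]
      constructor
      · rintro ⟨m, hm⟩ h0
        rw [h0] at hm
        simp only [abs_zero] at hm
        have h1 : (0 : ℝ) < 1 / ((m : ℝ) + 1) := by positivity
        linarith
      · intro hx
        obtain ⟨m, hm⟩ := exists_nat_one_div_lt (abs_pos.2 hx)
        exact ⟨m, hm.le⟩
    have htd := tendsto_measure_iUnion_atTop (μ := μ) hmono
    rw [hU, hμ0] at htd
    have hev := htd.eventually_const_lt (by norm_num : (1 / 2 : ℝ≥0∞) < 1)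
    obtain ⟨m, hm⟩ := hev.exists
    refine ⟨1 / ((m : ℝ) + 1), by positivity, ?_⟩
    have h21 : (1 : ℝ≥0∞) = 2 * (1 / 2) := by
      rw [one_div, ENNReal.mul_inv_cancel (by norm_num) ENNReal.ofNat_ne_top]
    calc (1 : ℝ≥0∞) = 2 * (1 / 2) := h21
      _ ≤ 2 * μ {x | 1 / ((m : ℝ) + 1) ≤ |x|} := mul_le_mul_right hm.le 2
  haveI hPL1 : IsProbabilityMeasure (L 1) := hLprob 1 zero_le_one
  haveI := st12_mix_prob μ (L 1)
  have hθpos : (0 : ℝ) < min (1 / 12 : ℝ) (ε / 24) := lt_min (by norm_num) (by positivity)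
  have hevK := (st12_tail_tendsto (mix μ (L 1))).eventually_lt_const
    (ENNReal.ofReal_pos.2 hθpos)
  obtain ⟨jK, hjK1, hjK⟩ : ∃ j : ℕ, 1 ≤ j ∧
      (mix μ (L 1)) {y : ℝ | (j : ℝ) ≤ |y|} < ENNReal.ofReal (min (1 / 12 : ℝ) (ε / 24)) := by
    obtain ⟨j, hj⟩ := (hevK.and (eventually_ge_atTop 1)).exists
    exact ⟨j, hj.2, hj.1⟩
  set K : ℝ := (jK : ℝ) with hKdef
  have hKpos : (0 : ℝ) < K := by
    rw [hKdef]; exact_mod_cast hjK1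
  have hch : ∀ n : ℕ, ∃ j : ℕ, (L (t n)) {s : ℝ | (j : ℝ) ≤ |s|}
      < ENNReal.ofReal ε * ENNReal.ofReal (t n) := by
    intro n
    haveI : IsProbabilityMeasure (L (t n)) := hLprob _ (htpos n).le
    have hpos : 0 < ENNReal.ofReal ε * ENNReal.ofReal (t n) :=
      ENNReal.mul_pos (ENNReal.ofReal_pos.2 hε).ne' (ENNReal.ofReal_pos.2 (htpos n)).ne'
    exact ((st12_tail_tendsto (L (t n))).eventually_lt_const hpos).exists
  choose jf hjf using hch
  obtain ⟨N, hN⟩ := eventually_atTop.1 (ht0.eventually_lt_const one_pos)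
  set M : ℕ := (Finset.range N).sup jf with hMdef
  refine ⟨max (2 * K / δ) (M : ℝ),
    lt_of_lt_of_le (div_pos (by linarith) hδpos) (le_max_left _ _), ?_⟩
  intro n
  have htn0 : (ENNReal.ofReal (t n)) ≠ 0 := (ENNReal.ofReal_pos.2 (htpos n)).ne'
  rw [ENNReal.div_lt_iff (Or.inl htn0) (Or.inl ENNReal.ofReal_ne_top)]
  by_cases hn : n < N
  · have hjle : (jf n : ℝ) ≤ max (2 * K / δ) (M : ℝ) := by
      refine le_trans ?_ (le_max_right _ _)
      exact_mod_cast Finset.le_sup (Finset.mem_range.2 hn)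
    refine lt_of_le_of_lt (measure_mono ?_) (hjf n)
    intro s hs
    simp only [Set.mem_setOf_eq] at *
    linarith
  · push_neg at hn
    have hr1 : t n < 1 := hN n hn
    set r := t n with hrdef
    have hr0 : 0 < r := htpos n
    haveI hLr : IsProbabilityMeasure (L r) := hLprob r hr0.le
    haveI := st12_mix_prob μ (L r)
    set n' : ℕ := Nat.ceil (1 / r) with hn'def
    have hn'ge : 1 / r ≤ (n' : ℝ) := Nat.le_ceil _
    have hn'lt : (n' : ℝ) < 1 / r + 1 := Nat.ceil_lt_add_one (by positivity)
    have hrn1 : 1 ≤ (n' : ℝ) * r := by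
      have h := mul_le_mul_of_nonneg_right hn'ge hr0.le
      rwa [one_div, inv_mul_cancel₀ hr0.ne'] at h
    have hrn2 : (n' : ℝ) * r ≤ 2 := by
      have h := mul_le_mul_of_nonneg_right hn'lt.le hr0.le
      rw [add_mul, one_div, inv_mul_cancel₀ hr0.ne', one_mul] at h
      nlinarith
    set p := (mix μ (L r)) {y : ℝ | 2 * K ≤ |y|} with hpdef
    have hA := st12_lemA (ν := mix μ (L r)) (st12_mix_symm hμneg) (2 * K) n' 0
    simp only [zero_add] at hA
    rw [st12_convPow_mix μ L hL0 hLsg hr0.le n'] at hA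
    set u := (n' : ℝ) * r - 1 with hudef
    have hu0 : (0 : ℝ) ≤ u := by simp only [hudef]; linarith
    have hu1' : (0 : ℝ) ≤ 1 - u := by simp only [hudef]; linarith
    haveI : IsProbabilityMeasure (L u) := hLprob _ hu0
    haveI : IsProbabilityMeasure (L (1 - u)) := hLprob _ hu1'
    haveI := st12_mix_prob μ (L u)
    haveI := st12_mix_prob μ (L (1 - u))
    set q := (mix μ (L 1)) {y : ℝ | K ≤ |y|} with hqdef
    have hsplit : mix μ (L ((n' : ℝ) * r)) = mconv (mix μ (L 1)) (mix μ (L u)) := by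
      rw [hLsg 1 u zero_le_one hu0]
      have h : (1 : ℝ) + u = (n' : ℝ) * r := by rw [hudef]; ring
      rw [h]
    have hLu2q : (mix μ (L u)) {y : ℝ | K ≤ |y|} ≤ 2 * q := by
      have hb := st12_lemB (α := mix μ (L u)) (β := mix μ (L (1 - u))) (st12_mix_symm hμneg) K
      rw [hLsg u (1 - u) hu0 hu1'] at hb
      have he : u + (1 - u) = (1 : ℝ) := by ring
      rw [he] at hb
      exact hb
    have h6 : 1 - (1 - p) ^ n' ≤ 6 * q := by
      calc 1 - (1 - p) ^ n'
          ≤ 2 * (mix μ (L ((n' : ℝ) * r))) {s | 2 * K ≤ |s|} := hA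
        _ ≤ 2 * (q + (mix μ (L u)) {y | K ≤ |y|}) := by
            rw [hsplit]
            exact mul_le_mul_right (st12_conv_tail _ _ K) 2
        _ ≤ 2 * (q + 2 * q) := mul_le_mul_right (add_le_add_right hLu2q q) 2
        _ = 6 * q := by ring
    have hpne : p ≠ ⊤ := measure_ne_top _ _
    have hqne : q ≠ ⊤ := measure_ne_top _ _
    have hP0 : (0 : ℝ) ≤ p.toReal := ENNReal.toReal_nonneg
    have hP1 : p.toReal ≤ 1 := by
      have h : p ≤ 1 := prob_le_one
      calc p.toReal ≤ (1 : ℝ≥0∞).toReal := ENNReal.toReal_mono ENNReal.one_ne_top h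
        _ = 1 := ENNReal.toReal_one
    have hQ : q.toReal < min (1 / 12 : ℝ) (ε / 24) := by
      have h := (ENNReal.toReal_lt_toReal hqne ENNReal.ofReal_ne_top).2 hjK
      rwa [ENNReal.toReal_ofReal hθpos.le] at h
    have hQ0 : (0 : ℝ) ≤ q.toReal := ENNReal.toReal_nonneg
    have hreal : 1 - (1 - p.toReal) ^ n' ≤ 6 * q.toReal := by
      have h := ENNReal.toReal_mono (ENNReal.mul_ne_top (by norm_num) hqne) h6
      rw [ENNReal.toReal_sub_of_le (pow_le_one' tsub_le_self n') ENNReal.one_ne_top,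
        ENNReal.toReal_pow, ENNReal.toReal_sub_of_le prob_le_one ENNReal.one_ne_top,
        ENNReal.toReal_one, ENNReal.toReal_mul] at h
      simpa using h
    have h612 : 6 * q.toReal ≤ 1 / 2 := by
      have h := min_le_left (1 / 12 : ℝ) (ε / 24)
      have := hQ.le.trans h
      linarith
    have hbern := st12_bern n' (x := 1 - p.toReal) (by linarith) (by linarith)
    have hhalf : (1 / 2 : ℝ) ≤ (1 - p.toReal) ^ n' := by linarith
    have hnP : (n' : ℝ) * p.toReal ≤ 12 * q.toReal := by
      have h1 : (n' : ℝ) * (1 - p.toReal) ^ n' * p.toReal ≤ 6 * q.toReal := by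
        have he : (1 : ℝ) - (1 - p.toReal) = p.toReal := by ring
        calc (n' : ℝ) * (1 - p.toReal) ^ n' * p.toReal
            = (n' : ℝ) * (1 - p.toReal) ^ n' * (1 - (1 - p.toReal)) := by rw [he]
          _ ≤ 1 - (1 - p.toReal) ^ n' := hbern
          _ ≤ 6 * q.toReal := hreal
      have h2 : 0 ≤ ((n' : ℝ) * p.toReal) * ((1 - p.toReal) ^ n' - 1 / 2) :=
        mul_nonneg (mul_nonneg (Nat.cast_nonneg _) hP0) (by linarith)
      nlinarith [h1, h2]
    have hPr : p.toReal ≤ 12 * q.toReal * r := by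
      have h3 : (1 / r) * p.toReal ≤ (n' : ℝ) * p.toReal :=
        mul_le_mul_of_nonneg_right hn'ge hP0
      have h4 : (1 / r) * p.toReal ≤ 12 * q.toReal := le_trans h3 hnP
      have h5 := mul_le_mul_of_nonneg_right h4 hr0.le
      calc p.toReal = (1 / r) * p.toReal * r := by field_simp
        _ ≤ 12 * q.toReal * r := h5
    have hmixt := st12_mix_tail μ (L r) hδpos.le
      (le_of_lt (div_pos (by linarith) hδpos) : (0 : ℝ) ≤ 2 * K / δ)
    rw [show δ * (2 * K / δ) = 2 * K from by rw [mul_comm, div_mul_cancel₀ _ hδpos.ne']] at hmixt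
    have hLrt : (L r) {s : ℝ | 2 * K / δ < |s|} ≤ 2 * p := by
      calc (L r) {s : ℝ | 2 * K / δ < |s|}
          = 1 * (L r) {s : ℝ | 2 * K / δ < |s|} := (one_mul _).symm
        _ ≤ (2 * μ {x | δ ≤ |x|}) * (L r) {s : ℝ | 2 * K / δ < |s|} :=
            mul_le_mul_left hδhalf _
        _ = 2 * (μ {x | δ ≤ |x|} * (L r) {s : ℝ | 2 * K / δ < |s|}) := by rw [mul_assoc]
        _ ≤ 2 * p := mul_le_mul_right hmixt 2
    calc (L r) {s : ℝ | max (2 * K / δ) (M : ℝ) < |s|}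
        ≤ (L r) {s : ℝ | 2 * K / δ < |s|} := by
          refine measure_mono fun s hs => ?_
          simp only [Set.mem_setOf_eq] at *
          exact lt_of_le_of_lt (le_max_left _ _) hs
      _ ≤ 2 * p := hLrt
      _ = ENNReal.ofReal (2 * p.toReal) := by
          rw [ENNReal.ofReal_mul (by norm_num), ENNReal.ofReal_ofNat,
            ENNReal.ofReal_toReal hpne]
      _ ≤ ENNReal.ofReal (24 * q.toReal * r) := ENNReal.ofReal_le_ofReal (by linarith)
      _ < ENNReal.ofReal (ε * r) := by
          rw [ENNReal.ofReal_lt_ofReal_iff (by positivity)]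
          have hq24 : q.toReal < ε / 24 := lt_of_lt_of_le hQ (min_le_right _ _)
          nlinarith [hr0]
      _ = ENNReal.ofReal ε * ENNReal.ofReal r := ENNReal.ofReal_mul hε.le
end
end

section
/- Let 0 < p ≤ α ≤ 1 and define g_p(s) = (p/α)·((α−p) s^{−p−1} + p s^{−2p−1})·e^{−s^{−p}} for s > 0. Then g_p is a probability density on (0,∞) (i.e. ∫_0^∞ g_p(s) ds = 1), and for every t ∈ ℝ, ∫_0^∞ (1 − (|t| s)^α)_+ · g_p(s) ds = exp(−|t|^p), where x_+ = max(x,0). -/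
open MeasureTheory Filter Topology ENNReal BoundedContinuousFunction

noncomputable section

section Aux
open Set

noncomputable def gfun (p α s : ℝ) : ℝ :=
  p / α * ((α - p) * s ^ (-p - 1) + p * s ^ (-(2 * p) - 1)) * Real.exp (-s ^ (-p))

noncomputable def Gfun (p α s : ℝ) : ℝ :=
  if 0 < s then Real.exp (-s ^ (-p)) * (1 + p / α * s ^ (-p)) else 0

noncomputable def Hfun (p α s : ℝ) : ℝ :=
  if 0 < s then p / α * (s ^ (α - p) * Real.exp (-s ^ (-p))) else 0

lemma gfun_nonneg {p α : ℝ} (hp : 0 < p) (hpα : p ≤ α) {s : ℝ} (hs : 0 < s) :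
    0 ≤ gfun p α s := by
  have hα : 0 < α := hp.trans_le hpα
  unfold gfun
  have h1 : (0:ℝ) ≤ (α - p) * s ^ (-p - 1) :=
    mul_nonneg (by linarith) (Real.rpow_pos_of_pos hs _).le
  have h2 : (0:ℝ) ≤ p * s ^ (-(2 * p) - 1) :=
    mul_nonneg hp.le (Real.rpow_pos_of_pos hs _).le
  positivity

lemma hasDerivAt_G {p α : ℝ} (hp : 0 < p) (hpα : p ≤ α) {s : ℝ} (hs : 0 < s) :
    HasDerivAt (Gfun p α) (gfun p α s) s := by
  have hα : 0 < α := hp.trans_le hpα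
  have hu : HasDerivAt (fun x : ℝ => x ^ (-p)) (-p * s ^ (-p - 1)) s :=
    Real.hasDerivAt_rpow_const (Or.inl hs.ne')
  have hφ : HasDerivAt (fun x : ℝ => Real.exp (-x ^ (-p)))
      (Real.exp (-s ^ (-p)) * (p * s ^ (-p - 1))) s := by
    have := (hu.neg).exp
    simp only [Pi.neg_apply] at this
    convert this using 1
    ring
  have hψ : HasDerivAt (fun x : ℝ => 1 + p / α * x ^ (-p))
      (p / α * (-p * s ^ (-p - 1))) s := (hu.const_mul (p / α)).const_add 1
  have hF := hφ.mul hψ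
  have heq : (fun x : ℝ => Real.exp (-x ^ (-p)) * (1 + p / α * x ^ (-p))) =ᶠ[𝓝 s] Gfun p α := by
    filter_upwards [Ioi_mem_nhds hs] with x hx
    simp [Gfun, mem_Ioi.mp hx]
  refine (hF.congr_of_eventuallyEq heq.symm).congr_deriv ?_
  have hmul : s ^ (-p - 1) * s ^ (-p) = s ^ (-(2 * p) - 1) := by
    rw [← Real.rpow_add hs]; ring_nf
  unfold gfun
  field_simp
  rw [mul_comm p 2]
  linear_combination p * hmul

lemma hasDerivAt_H {p α : ℝ} (hp : 0 < p) (hpα : p ≤ α) {s : ℝ} (hs : 0 < s) :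
    HasDerivAt (Hfun p α) (s ^ α * gfun p α s) s := by
  have hα : 0 < α := hp.trans_le hpα
  have hu : HasDerivAt (fun x : ℝ => x ^ (-p)) (-p * s ^ (-p - 1)) s :=
    Real.hasDerivAt_rpow_const (Or.inl hs.ne')
  have hφ : HasDerivAt (fun x : ℝ => Real.exp (-x ^ (-p)))
      (Real.exp (-s ^ (-p)) * (p * s ^ (-p - 1))) s := by
    have := (hu.neg).exp
    simp only [Pi.neg_apply] at this
    convert this using 1
    ring
  have hv : HasDerivAt (fun x : ℝ => x ^ (α - p)) ((α - p) * s ^ (α - p - 1)) s :=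
    Real.hasDerivAt_rpow_const (Or.inl hs.ne')
  have hF := (hv.mul hφ).const_mul (p / α)
  have heq : (fun x : ℝ => p / α * (x ^ (α - p) * Real.exp (-x ^ (-p)))) =ᶠ[𝓝 s] Hfun p α := by
    filter_upwards [Ioi_mem_nhds hs] with x hx
    simp [Hfun, mem_Ioi.mp hx]
  refine (hF.congr_of_eventuallyEq heq.symm).congr_deriv ?_
  have h1 : s ^ (α - p - 1) = s ^ α * s ^ (-p - 1) := by
    rw [← Real.rpow_add hs]; ring_nf
  have h2 : s ^ (α - p) * s ^ (-p - 1) = s ^ α * s ^ (-(2 * p) - 1) := by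
    rw [← Real.rpow_add hs, ← Real.rpow_add hs]; ring_nf
  unfold gfun
  field_simp
  rw [mul_comm p 2]
  linear_combination (α - p) * h1 + p * h2

lemma tendsto_G_atTop {p α : ℝ} (hp : 0 < p) : Tendsto (Gfun p α) atTop (𝓝 1) := by
  have h0 : Tendsto (fun s : ℝ => s ^ (-p)) atTop (𝓝 0) := tendsto_rpow_neg_atTop hp
  have h1 : Tendsto (fun s : ℝ => Real.exp (-s ^ (-p)) * (1 + p / α * s ^ (-p))) atTop
      (𝓝 (Real.exp (-0) * (1 + p / α * 0))) :=
    ((Real.continuous_exp.tendsto _).comp h0.neg).mul ((h0.const_mul (p / α)).const_add 1)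
  simp only [neg_zero, Real.exp_zero, mul_zero, add_zero, one_mul] at h1
  refine h1.congr' ?_
  filter_upwards [Ioi_mem_atTop (0 : ℝ)] with x hx
  simp [Gfun, mem_Ioi.mp hx]

lemma tendsto_rpow_neg_zero {p : ℝ} (hp : 0 < p) :
    Tendsto (fun s : ℝ => s ^ (-p)) (𝓝[>] (0 : ℝ)) atTop := by
  have h1 : Tendsto (fun s : ℝ => s ^ p) (𝓝[>] (0 : ℝ)) (𝓝[>] 0) := by
    apply tendsto_nhdsWithin_of_tendsto_nhds_of_eventually_within
    · have hc := (Real.continuousAt_rpow_const 0 p (Or.inr hp.le)).tendsto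
      rw [Real.zero_rpow hp.ne'] at hc
      exact hc.mono_left nhdsWithin_le_nhds
    · filter_upwards [self_mem_nhdsWithin] with x hx
      exact Real.rpow_pos_of_pos hx p
  have h2 := tendsto_inv_nhdsGT_zero.comp h1
  refine h2.congr' ?_
  filter_upwards [self_mem_nhdsWithin] with x hx
  simp [Function.comp, Real.rpow_neg (le_of_lt hx)]

lemma tendsto_G_zero {p α : ℝ} (hp : 0 < p) :
    Tendsto (Gfun p α) (𝓝[>] (0 : ℝ)) (𝓝 0) := by
  have hw : Tendsto (fun u : ℝ => Real.exp (-u) * (1 + p / α * u)) atTop (𝓝 0) := by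
    have h3 := Real.tendsto_exp_neg_atTop_nhds_zero.add
      ((Real.tendsto_pow_mul_exp_neg_atTop_nhds_zero 1).const_mul (p / α))
    simp only [pow_one, add_zero, mul_zero] at h3
    exact h3.congr (fun u => by ring)
  have := hw.comp (tendsto_rpow_neg_zero hp)
  refine this.congr' ?_
  filter_upwards [self_mem_nhdsWithin] with x hx
  simp [Function.comp, Gfun, mem_Ioi.mp hx]

lemma tendsto_H_zero {p α : ℝ} (hp : 0 < p) (hpα : p ≤ α) :
    Tendsto (Hfun p α) (𝓝[>] (0 : ℝ)) (𝓝 0) := by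
  have hα : 0 < α := hp.trans_le hpα
  have hg : Tendsto (fun s : ℝ => p / α * Real.exp (-s ^ (-p))) (𝓝[>] (0 : ℝ)) (𝓝 0) := by
    have := (Real.tendsto_exp_neg_atTop_nhds_zero.comp (tendsto_rpow_neg_zero hp)).const_mul (p / α)
    simpa using this
  refine squeeze_zero' ?_ ?_ hg
  · filter_upwards [self_mem_nhdsWithin] with x hx
    have hx0 : (0:ℝ) < x := hx
    simp only [Hfun, if_pos hx0]
    positivity
  · filter_upwards [Ioo_mem_nhdsGT_of_mem (by norm_num : (0:ℝ) ∈ Ico (0:ℝ) 1)] with x hx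
    simp only [Hfun, if_pos hx.1]
    have h1 : x ^ (α - p) ≤ 1 := Real.rpow_le_one hx.1.le hx.2.le (by linarith)
    have h2 : (0:ℝ) < Real.exp (-x ^ (-p)) := Real.exp_pos _
    have := mul_le_of_le_one_left h2.le h1
    calc p / α * (x ^ (α - p) * Real.exp (-x ^ (-p)))
        ≤ p / α * Real.exp (-x ^ (-p)) := by
          apply mul_le_mul_of_nonneg_left _ (by positivity)
          exact this
      _ = p / α * Real.exp (-x ^ (-p)) := rfl

lemma contWithin_G {p α : ℝ} (hp : 0 < p) : ContinuousWithinAt (Gfun p α) (Ici 0) 0 := by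
  rw [← continuousWithinAt_Ioi_iff_Ici]
  unfold ContinuousWithinAt
  have hG0 : Gfun p α 0 = 0 := by simp [Gfun]
  rw [hG0]
  exact tendsto_G_zero hp

lemma contWithin_H {p α : ℝ} (hp : 0 < p) (hpα : p ≤ α) :
    ContinuousWithinAt (Hfun p α) (Ici 0) 0 := by
  rw [← continuousWithinAt_Ioi_iff_Ici]
  unfold ContinuousWithinAt
  have hH0 : Hfun p α 0 = 0 := by simp [Hfun]
  rw [hH0]
  exact tendsto_H_zero hp hpα

lemma integral_gfun {p α : ℝ} (hp : 0 < p) (hpα : p ≤ α) :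
    ∫ s in Ioi (0:ℝ), gfun p α s = 1 := by
  have h := integral_Ioi_of_hasDerivAt_of_nonneg (contWithin_G hp)
    (fun x hx => hasDerivAt_G hp hpα (mem_Ioi.mp hx))
    (fun x hx => gfun_nonneg hp hpα (mem_Ioi.mp hx)) (tendsto_G_atTop hp)
  simpa [Gfun] using h

lemma integrable_gfun {p α : ℝ} (hp : 0 < p) (hpα : p ≤ α) :
    IntegrableOn (gfun p α) (Ioi (0:ℝ)) :=
  integrableOn_Ioi_deriv_of_nonneg (contWithin_G hp)
    (fun x hx => hasDerivAt_G hp hpα (mem_Ioi.mp hx))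
    (fun x hx => gfun_nonneg hp hpα (mem_Ioi.mp hx)) (tendsto_G_atTop hp)

lemma key2 {p α c : ℝ} (hp : 0 < p) (hpα : p ≤ α) (hc : 0 < c) :
    ∫ s in Ioi (0:ℝ), max (1 - (c * s) ^ α) 0 * gfun p α s = Real.exp (-c ^ p) := by
  have hα : 0 < α := hp.trans_le hpα
  set b : ℝ := c⁻¹ with hb
  have hb0 : 0 < b := inv_pos.mpr hc
  set f' : ℝ → ℝ := fun s => (1 - (c * s) ^ α) * gfun p α s with hf'
  set F : ℝ → ℝ := fun s => Gfun p α s - c ^ α * Hfun p α s with hF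
  have hcont_g : ∀ x : ℝ, 0 < x → ContinuousAt (gfun p α) x := by
    intro x hx
    have h1 : ContinuousAt (fun s : ℝ => s ^ (-p - 1)) x :=
      Real.continuousAt_rpow_const x _ (Or.inl hx.ne')
    have h2 : ContinuousAt (fun s : ℝ => s ^ (-(2 * p) - 1)) x :=
      Real.continuousAt_rpow_const x _ (Or.inl hx.ne')
    have h3 : ContinuousAt (fun s : ℝ => s ^ (-p)) x :=
      Real.continuousAt_rpow_const x _ (Or.inl hx.ne')
    exact (continuousAt_const.mul ((continuousAt_const.mul h1).add
      (continuousAt_const.mul h2))).mul h3.neg.rexp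
  have hcont_f' : ∀ x : ℝ, 0 < x → ContinuousAt f' x := by
    intro x hx
    have h4 : ContinuousAt (fun s : ℝ => (c * s) ^ α) x := by
      have h5 := Real.continuousAt_rpow_const (c * x) α (Or.inl (mul_pos hc hx).ne')
      exact h5.comp (continuous_const.mul continuous_id).continuousAt
    exact (continuousAt_const.sub h4).mul (hcont_g x hx)
  have hle : ∀ x ∈ Ioc (0:ℝ) b, (c * x) ^ α ≤ 1 := by
    intro x hx
    apply Real.rpow_le_one (mul_nonneg hc.le hx.1.le) _ hα.le
    have h6 : c * x ≤ c * b := mul_le_mul_of_nonneg_left hx.2 hc.le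
    rwa [hb, mul_inv_cancel₀ hc.ne'] at h6
  have hint_g : IntegrableOn (gfun p α) (Ioc 0 b) :=
    (integrable_gfun hp hpα).mono_set Ioc_subset_Ioi_self
  have hint : IntegrableOn f' (Ioc 0 b) := by
    apply Integrable.mono' hint_g
    · exact ContinuousOn.aestronglyMeasurable
        (fun x hx => (hcont_f' x hx.1).continuousWithinAt) measurableSet_Ioc
    · rw [ae_restrict_iff' measurableSet_Ioc]
      refine ae_of_all _ fun x hx => ?_
      have hg := gfun_nonneg hp hpα hx.1
      have h5 := hle x hx
      have h6 : 0 ≤ (c * x) ^ α := Real.rpow_nonneg (mul_nonneg hc.le hx.1.le) _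
      rw [Real.norm_eq_abs, abs_of_nonneg (mul_nonneg (by linarith) hg)]
      nlinarith
  have hIint : IntervalIntegrable f' volume 0 b := by
    rw [intervalIntegrable_iff_integrableOn_Ioc_of_le hb0.le]; exact hint
  have hderiv : ∀ x ∈ Ioo (0:ℝ) b, HasDerivWithinAt F (f' x) (Ioi x) x := by
    intro x hx
    have h := (hasDerivAt_G hp hpα hx.1).sub ((hasDerivAt_H hp hpα hx.1).const_mul (c ^ α))
    have he : gfun p α x - c ^ α * (x ^ α * gfun p α x) = f' x := by
      simp only [hf']
      rw [Real.mul_rpow hc.le hx.1.le]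
      ring
    exact (he ▸ h).hasDerivWithinAt
  have hFcont : ContinuousOn F (Icc 0 b) := by
    intro x hx
    rcases hx.1.eq_or_lt with rfl | hx0
    · exact ((contWithin_G hp).sub ((contWithin_H hp hpα).const_mul (c ^ α))).mono
        Icc_subset_Ici_self
    · exact ((hasDerivAt_G hp hpα hx0).sub
        ((hasDerivAt_H hp hpα hx0).const_mul (c ^ α))).continuousAt.continuousWithinAt
  have key := intervalIntegral.integral_eq_sub_of_hasDeriv_right_of_le hb0.le hFcont hderiv hIint
  have hF0 : F 0 = 0 := by simp [hF, Gfun, Hfun]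
  have hbp : b ^ (-p) = c ^ p := by
    rw [hb, Real.inv_rpow hc.le, Real.rpow_neg hc.le, inv_inv]
  have hbap : b ^ (α - p) = c ^ (p - α) := by
    rw [hb, Real.inv_rpow hc.le, ← Real.rpow_neg hc.le, neg_sub]
  have hFb : F b = Real.exp (-c ^ p) := by
    have hcc : c ^ α * c ^ (p - α) = c ^ p := by rw [← Real.rpow_add hc]; ring_nf
    simp only [hF, Gfun, Hfun, if_pos hb0, hbp, hbap]
    linear_combination (-(p / α * Real.exp (-c ^ p))) * hcc
  have heqn : EqOn f' (fun s => max (1 - (c * s) ^ α) 0 * gfun p α s) (Ioc 0 b) := by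
    intro x hx
    simp only [hf']
    rw [max_eq_left (by linarith [hle x hx])]
  have hioc : ∫ s in Ioc (0:ℝ) b, max (1 - (c * s) ^ α) 0 * gfun p α s = Real.exp (-c ^ p) := by
    rw [← setIntegral_congr_fun measurableSet_Ioc heqn,
      ← intervalIntegral.integral_of_le hb0.le, key, hF0, hFb, sub_zero]
  have hioi : ∫ s in Ioi b, max (1 - (c * s) ^ α) 0 * gfun p α s = 0 := by
    rw [setIntegral_congr_fun (g := fun _ => (0:ℝ)) measurableSet_Ioi ?_, integral_zero]
    intro x hx
    have h1 : 1 ≤ c * x := by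
      have : c * b ≤ c * x := mul_le_mul_of_nonneg_left (le_of_lt hx) hc.le
      rwa [hb, mul_inv_cancel₀ hc.ne'] at this
    have h2 : 1 ≤ (c * x) ^ α := Real.one_le_rpow h1 hα.le
    simp [max_eq_right (by linarith : 1 - (c * x) ^ α ≤ 0)]
  have hint_max : IntegrableOn (fun s => max (1 - (c * s) ^ α) 0 * gfun p α s) (Ioc 0 b) :=
    hint.congr_fun heqn measurableSet_Ioc
  have hint_max2 : IntegrableOn (fun s => max (1 - (c * s) ^ α) 0 * gfun p α s) (Ioi b) := by
    apply IntegrableOn.congr_fun (integrableOn_zero) _ measurableSet_Ioi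
    intro x hx
    have h1 : 1 ≤ c * x := by
      have : c * b ≤ c * x := mul_le_mul_of_nonneg_left (le_of_lt hx) hc.le
      rwa [hb, mul_inv_cancel₀ hc.ne'] at this
    have h2 : 1 ≤ (c * x) ^ α := Real.one_le_rpow h1 hα.le
    simp [max_eq_right (by linarith : 1 - (c * x) ^ α ≤ 0)]
  rw [← Ioc_union_Ioi_eq_Ioi hb0.le,
    setIntegral_union (Ioc_disjoint_Ioi le_rfl) measurableSet_Ioi hint_max hint_max2,
    hioc, hioi, add_zero]

end Aux

theorem stmt18 (p α : ℝ) (hp : 0 < p) (hpα : p ≤ α) (hα : α ≤ 1) :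
    (∫ s in Set.Ioi (0 : ℝ),
        p / α * ((α - p) * s ^ (-p - 1) + p * s ^ (-(2 * p) - 1)) * Real.exp (-s ^ (-p))
      = 1) ∧
    ∀ t : ℝ,
      ∫ s in Set.Ioi (0 : ℝ),
          max (1 - (|t| * s) ^ α) 0 *
            (p / α * ((α - p) * s ^ (-p - 1) + p * s ^ (-(2 * p) - 1)) *
              Real.exp (-s ^ (-p)))
        = Real.exp (-(|t| ^ p)) := by
  have hα0 : 0 < α := hp.trans_le hpα
  constructor
  · exact integral_gfun hp hpα
  · intro t
    by_cases ht : t = 0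
    · subst ht
      simp only [abs_zero, zero_mul, Real.zero_rpow hα0.ne', Real.zero_rpow hp.ne', sub_zero,
        neg_zero, Real.exp_zero]
      have h1 := integral_gfun hp hpα
      simp only [gfun] at h1
      rw [setIntegral_congr_fun measurableSet_Ioi
        (g := fun s : ℝ => p / α * ((α - p) * s ^ (-p - 1) + p * s ^ (-(2 * p) - 1)) *
          Real.exp (-s ^ (-p)))
        (fun x _ => by rw [max_eq_left zero_le_one, one_mul])]
      exact h1
    · have hc : 0 < |t| := abs_pos.mpr ht
      have h2 := key2 (c := |t|) hp hpα hc
      simp only [gfun] at h2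
      exact h2
end
end

section
/- Let n ≥ 2 and let ω_n be the uniform (rotation-invariant) probability measure on the unit sphere S^{n−1} ⊂ ℝ^n. Then ω_n is weakly stable: for all a, b ∈ ℝ there exists a probability measure λ on [0,∞) such that (T_a ω_n) ∗ (T_b ω_n) = ω_n∘λ; explicitly, one may take λ to be the law of ‖aU + bU′‖_2 for independent random vectors U, U′ each distributed according to ω_n. -/
open MeasureTheory Filter Topology ENNReal Matrix

set_option synthInstance.maxHeartbeats 1000000
set_option maxHeartbeats 1000000

noncomputable section


/-- `T_c μ` on `ℝ^n`: pushforward of `μ` under `x ↦ c • x`. -/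
def rescaleE (n : ℕ) (c : ℝ) (μ : Measure (EuclideanSpace ℝ (Fin n))) :
    Measure (EuclideanSpace ℝ (Fin n)) := μ.map (fun x => c • x)

/-- Scale mixture `μ ∘ lam` for a measure `μ` on `ℝ^n` and a measure `lam` on `ℝ`:
pushforward of `μ × lam` under `(x, s) ↦ s • x`. -/
def mixE (n : ℕ) (μ : Measure (EuclideanSpace ℝ (Fin n))) (lam : Measure ℝ) :
    Measure (EuclideanSpace ℝ (Fin n)) := (μ.prod lam).map (fun p => p.2 • p.1)

/-- Convolution of two measures on `ℝ^n`. -/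
def mconvE (n : ℕ) (μ ν : Measure (EuclideanSpace ℝ (Fin n))) :
    Measure (EuclideanSpace ℝ (Fin n)) := (μ.prod ν).map (fun p => p.1 + p.2)

namespace Stmt19Aux

variable {n : ℕ}

local notation "E" => EuclideanSpace ℝ (Fin n)
local notation "G" => Matrix.unitaryGroup (Fin n) ℝ

lemma isCompact_ug :
    IsCompact (Matrix.unitaryGroup (Fin n) ℝ : Set (Matrix (Fin n) (Fin n) ℝ)) := by
  have hclosed : IsClosed (Matrix.unitaryGroup (Fin n) ℝ : Set (Matrix (Fin n) (Fin n) ℝ)) := by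
    have hco : (Matrix.unitaryGroup (Fin n) ℝ : Set (Matrix (Fin n) (Fin n) ℝ))
        = {A | star A * A = 1} ∩ {A | A * star A = 1} := by
      ext A
      exact Unitary.mem_iff
    rw [hco]
    exact (isClosed_eq (continuous_star.matrix_mul continuous_id) continuous_const).inter
      (isClosed_eq (continuous_id.matrix_mul continuous_star) continuous_const)
  have hsub : (Matrix.unitaryGroup (Fin n) ℝ : Set (Matrix (Fin n) (Fin n) ℝ))
      ⊆ Set.pi Set.univ (fun _ : Fin n => Set.pi Set.univ fun _ : Fin n => Set.Icc (-1:ℝ) 1) := by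
    intro A hA
    intro i _
    intro j _
    have h := entry_norm_bound_of_unitary hA i j
    rw [Real.norm_eq_abs] at h
    exact abs_le.mp h
  exact IsCompact.of_isClosed_subset
    (isCompact_univ_pi fun _ => isCompact_univ_pi fun _ => isCompact_Icc) hclosed hsub

instance : CompactSpace G := isCompact_iff_compactSpace.mp isCompact_ug

instance : IsTopologicalGroup G where
  continuous_mul := by
    apply Continuous.subtype_mk
    exact (continuous_subtype_val.comp continuous_fst).matrix_mul
      (continuous_subtype_val.comp continuous_snd)
  continuous_inv := by
    apply Continuous.subtype_mk
    exact continuous_subtype_val.star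

instance : MeasurableSpace (Matrix (Fin n) (Fin n) ℝ) :=
  inferInstanceAs (MeasurableSpace (Fin n → Fin n → ℝ))

instance : BorelSpace (Matrix (Fin n) (Fin n) ℝ) :=
  inferInstanceAs (BorelSpace (Fin n → Fin n → ℝ))

instance : BorelSpace G :=
  Subtype.borelSpace (Matrix.unitaryGroup (Fin n) ℝ : Set (Matrix (Fin n) (Fin n) ℝ))

def gammaMeasure (n : ℕ) : Measure (Matrix.unitaryGroup (Fin n) ℝ) :=
  (MeasureTheory.Measure.haarMeasure
    (⊤ : TopologicalSpace.PositiveCompacts (Matrix.unitaryGroup (Fin n) ℝ))).inv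

instance : IsProbabilityMeasure (gammaMeasure n) := by
  constructor
  unfold gammaMeasure
  rw [Measure.inv_apply, Set.inv_univ]
  have h := Measure.haarMeasure_self
    (K₀ := (⊤ : TopologicalSpace.PositiveCompacts (Matrix.unitaryGroup (Fin n) ℝ)))
  rwa [TopologicalSpace.PositiveCompacts.coe_top] at h

instance : (gammaMeasure n).IsMulRightInvariant := by
  unfold gammaMeasure
  infer_instance

/-- The action of the orthogonal group on Euclidean space. -/
def act (g : G) (x : E) : E := Matrix.toEuclideanLin g.1 x

lemma act_apply_eq (g : G) (x : E) :
    act g x = (WithLp.equiv 2 (Fin n → ℝ)).symm (g.1 *ᵥ (WithLp.equiv 2 (Fin n → ℝ)) x) :=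
  Matrix.toEuclideanLin_apply _ _

lemma continuous_act : Continuous fun p : G × E => act p.1 p.2 := by
  simp only [act_apply_eq]
  exact (PiLp.continuous_toLp 2 (fun _ : Fin n => ℝ)).comp
    (((continuous_subtype_val.comp continuous_fst)).matrix_mulVec
      ((PiLp.continuous_ofLp 2 (fun _ : Fin n => ℝ)).comp continuous_snd))

lemma measurable_act : Measurable fun p : G × E => act p.1 p.2 :=
  continuous_act.measurable

lemma act_mul (g h : G) (x : E) : act (g * h) x = act g (act h x) := by
  simp only [act_apply_eq, Equiv.apply_symm_apply, Matrix.mulVec_mulVec]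
  rfl

lemma act_smul (g : G) (s : ℝ) (x : E) : act g (s • x) = s • act g x :=
  _root_.map_smul (Matrix.toEuclideanLin g.1) s x

lemma act_add_smul (g : G) (a b : ℝ) (u v : E) :
    act g (a • u + b • v) = a • act g u + b • act g v := by
  simp only [act, map_add, _root_.map_smul]

lemma inner_eq_dot (x y : E) :
    (inner ℝ x y : ℝ) = (WithLp.equiv 2 (Fin n → ℝ)) x ⬝ᵥ (WithLp.equiv 2 (Fin n → ℝ)) y := by
  simp [PiLp.inner_apply, RCLike.inner_apply, starRingEnd_apply, dotProduct, mul_comm]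

lemma inner_act (g : G) (x y : E) :
    (inner ℝ (act g x) (act g y) : ℝ) = inner ℝ x y := by
  have hg : (g.1)ᵀ * g.1 = 1 := by
    have h := g.2.1
    rwa [Matrix.star_eq_conjTranspose, Matrix.conjTranspose_eq_transpose_of_trivial] at h
  rw [inner_eq_dot, inner_eq_dot, act_apply_eq, act_apply_eq, Equiv.apply_symm_apply,
    Equiv.apply_symm_apply, Matrix.dotProduct_mulVec, ← Matrix.mulVec_transpose,
    Matrix.mulVec_mulVec, hg, Matrix.one_mulVec]

/-- The action as a linear isometry equivalence. -/
def actIso (g : G) : E ≃ₗᵢ[ℝ] E :=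
  LinearEquiv.isometryOfInner
    (LinearEquiv.ofLinear (Matrix.toEuclideanLin g.1) (Matrix.toEuclideanLin (g⁻¹).1)
      (by
        ext x
        simp only [LinearMap.coe_comp, Function.comp_apply, LinearMap.id_coe, id_eq,
          Matrix.toEuclideanLin_apply, Equiv.apply_symm_apply, Matrix.mulVec_mulVec]
        rw [Matrix.UnitaryGroup.inv_val, g.2.2, Matrix.one_mulVec])
      (by
        ext x
        simp only [LinearMap.coe_comp, Function.comp_apply, LinearMap.id_coe, id_eq,
          Matrix.toEuclideanLin_apply, Equiv.apply_symm_apply, Matrix.mulVec_mulVec]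
        rw [Matrix.UnitaryGroup.inv_val, g.2.1, Matrix.one_mulVec]))
    (fun x y => inner_act g x y)

lemma actIso_apply (g : G) (x : E) : actIso g x = act g x := rfl

lemma exists_act_eq (f : E ≃ₗᵢ[ℝ] E) : ∃ g : G, ∀ x : E, act g x = f x := by
  classical
  set eqL : E ≃ₗ[ℝ] (Fin n → ℝ) := WithLp.linearEquiv 2 ℝ (Fin n → ℝ) with heqL
  set f' : (Fin n → ℝ) →ₗ[ℝ] (Fin n → ℝ) :=
    (eqL.toLinearMap.comp f.toLinearEquiv.toLinearMap).comp eqL.symm.toLinearMap with hf'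
  set M := LinearMap.toMatrix' f' with hM
  have hMv : ∀ v : Fin n → ℝ, M *ᵥ v = f' v := by
    intro v
    rw [← Matrix.toLin'_apply, hM, Matrix.toLin'_toMatrix']
  have hf'apply : ∀ v : Fin n → ℝ,
      f' v = (WithLp.equiv 2 (Fin n → ℝ)) (f ((WithLp.equiv 2 (Fin n → ℝ)).symm v)) := by
    intro v; rfl
  have hMmem : M ∈ Matrix.unitaryGroup (Fin n) ℝ := by
    rw [Matrix.mem_unitaryGroup_iff']
    ext i j
    have hstar : (star M * M) i j = ∑ k, M k i * M k j := by
      simp [Matrix.mul_apply, Matrix.star_eq_conjTranspose,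
        Matrix.conjTranspose_apply, star_trivial]
    rw [hstar]
    have hcol : ∀ (i : Fin n) (k : Fin n),
        M k i = (f (EuclideanSpace.single i (1:ℝ))) k := by
      intro i k
      have harg : ((WithLp.equiv 2 (Fin n → ℝ)).symm
          (Pi.single i (1:ℝ)) : EuclideanSpace ℝ (Fin n))
          = EuclideanSpace.single i (1:ℝ) := by
        rfl
      rw [hM, LinearMap.toMatrix'_apply, hf'apply, harg]
      rfl
    simp_rw [hcol]
    calc ∑ k, (f (EuclideanSpace.single i (1:ℝ))) k * (f (EuclideanSpace.single j (1:ℝ))) k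
        = (inner ℝ (f (EuclideanSpace.single i (1:ℝ))) (f (EuclideanSpace.single j (1:ℝ))) : ℝ) := by
          rw [inner_eq_dot]; rfl
      _ = (inner ℝ (EuclideanSpace.single i (1:ℝ)) (EuclideanSpace.single j (1:ℝ)) : ℝ) :=
          f.inner_map_map _ _
      _ = (1 : Matrix (Fin n) (Fin n) ℝ) i j := by
          rw [EuclideanSpace.inner_single_left]
          simp [EuclideanSpace.single_apply, Matrix.one_apply, eq_comm]
  refine ⟨⟨M, hMmem⟩, fun x => ?_⟩
  rw [act_apply_eq]
  show (WithLp.equiv 2 (Fin n → ℝ)).symm (M *ᵥ (WithLp.equiv 2 (Fin n → ℝ)) x) = f x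
  rw [hMv, hf'apply]
  simp

lemma key (hn : 0 < n) (ω : Measure (EuclideanSpace ℝ (Fin n)))
    (hω : IsProbabilityMeasure ω)
    (hsphere : ω (Metric.sphere (0 : EuclideanSpace ℝ (Fin n)) 1) = 1)
    (hrot : ∀ f : EuclideanSpace ℝ (Fin n) ≃ₗᵢ[ℝ] EuclideanSpace ℝ (Fin n), ω.map ⇑f = ω)
    (a b : ℝ) :
    mconvE n (rescaleE n a ω) (rescaleE n b ω)
      = mixE n ω ((ω.prod ω).map (fun p => ‖a • p.1 + b • p.2‖)) := by
  haveI := hω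
  set γ := gammaMeasure n with hγ
  set T : E × E → E := fun p => a • p.1 + b • p.2 with hTdef
  have hTcont : Continuous T := (continuous_fst.const_smul a).add (continuous_snd.const_smul b)
  have hTmeas : Measurable T := hTcont.measurable
  set lam : Measure ℝ := (ω.prod ω).map (fun p => ‖T p‖) with hlamdef
  haveI hlamprob : IsProbabilityMeasure lam :=
    Measure.isProbabilityMeasure_map (hTmeas.norm.aemeasurable)
  set u₀ : EuclideanSpace ℝ (Fin n) := EuclideanSpace.single (⟨0, hn⟩ : Fin n) (1:ℝ) with hu₀
  have hu₀norm : ‖u₀‖ = 1 := by rw [hu₀, EuclideanSpace.norm_single]; norm_num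
  have step1 : ∀ (g : ↥(Matrix.unitaryGroup (Fin n) ℝ)) (h : EuclideanSpace ℝ (Fin n) → ℝ≥0∞),
      Measurable h → ∫⁻ x, h (act g x) ∂ω = ∫⁻ x, h x ∂ω := by
    intro g h hh
    conv_rhs => rw [← hrot (actIso g)]
    rw [lintegral_map hh (actIso g).continuous.measurable]
    rfl
  have hsmul_meas : ∀ s : ℝ, Measurable fun x : EuclideanSpace ℝ (Fin n) => s • x :=
    fun s => (continuous_const_smul s).measurable
  have hsphae : ∀ᵐ θ ∂ω, ‖θ‖ = 1 := by
    have hms : MeasurableSet (Metric.sphere (0:EuclideanSpace ℝ (Fin n)) 1) :=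
      Metric.isClosed_sphere.measurableSet
    have h0 : ω (Metric.sphere (0:EuclideanSpace ℝ (Fin n)) 1)ᶜ = 0 := by
      rw [measure_compl hms (measure_ne_top _ _), hsphere, measure_univ, tsub_self]
    rw [ae_iff]
    have hset : {θ : EuclideanSpace ℝ (Fin n) | ¬ ‖θ‖ = 1}
        = (Metric.sphere (0:EuclideanSpace ℝ (Fin n)) 1)ᶜ := by
      ext θ; simp [mem_sphere_zero_iff_norm]
    rw [hset]; exact h0
  have main : ∀ h : EuclideanSpace ℝ (Fin n) → ℝ≥0∞, Measurable h →
      ∫⁻ p, h (T p) ∂(ω.prod ω) = ∫⁻ q, h (q.2 • q.1) ∂(ω.prod lam) := by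
    intro h hh
    set F : EuclideanSpace ℝ (Fin n) → ℝ≥0∞ := fun w => ∫⁻ g, h (act g w) ∂γ with hFdef
    have step3 : ∀ w : EuclideanSpace ℝ (Fin n), F w = F (‖w‖ • u₀) := by
      intro w
      have hnorm : ‖(‖w‖ • u₀ : EuclideanSpace ℝ (Fin n))‖ = ‖w‖ := by
        rw [norm_smul, hu₀norm, Real.norm_eq_abs, abs_of_nonneg (norm_nonneg w), mul_one]
      obtain ⟨g₀, hg₀⟩ := exists_act_eq
        (Submodule.reflection (ℝ ∙ ((‖w‖ • u₀ : EuclideanSpace ℝ (Fin n)) - w))ᗮ)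
      have hg₀w : act g₀ (‖w‖ • u₀) = w := by rw [hg₀]; exact Submodule.reflection_sub hnorm
      simp only [hFdef]
      calc ∫⁻ g, h (act g w) ∂γ
          = ∫⁻ g, h (act g (act g₀ (‖w‖ • u₀))) ∂γ := by rw [hg₀w]
        _ = ∫⁻ g, h (act (g * g₀) (‖w‖ • u₀)) ∂γ := by simp_rw [act_mul]
        _ = ∫⁻ g, h (act g (‖w‖ • u₀)) ∂γ :=
            lintegral_mul_right_eq_self (fun g => h (act g (‖w‖ • u₀))) g₀
    have step2 : ∫⁻ p, h (T p) ∂(ω.prod ω) = ∫⁻ p, F (T p) ∂(ω.prod ω) := by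
      have hswap1 : ∫⁻ p, F (T p) ∂(ω.prod ω)
          = ∫⁻ g, ∫⁻ p, h (act g (T p)) ∂(ω.prod ω) ∂γ := by
        simp only [hFdef]
        exact lintegral_lintegral_swap
          (hh.comp (measurable_act.comp
            (measurable_snd.prodMk (hTmeas.comp measurable_fst)))).aemeasurable
      have hfix : ∀ g : ↥(Matrix.unitaryGroup (Fin n) ℝ),
          ∫⁻ p, h (act g (T p)) ∂(ω.prod ω) = ∫⁻ p, h (T p) ∂(ω.prod ω) := by
        intro g
        have hexp : ∀ p : EuclideanSpace ℝ (Fin n) × EuclideanSpace ℝ (Fin n),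
            act g (T p) = a • act g p.1 + b • act g p.2 := fun p => act_add_smul g a b p.1 p.2
        have hactg : Measurable (act g) := (actIso g).continuous.measurable
        have hm1 : Measurable fun p : EuclideanSpace ℝ (Fin n) × EuclideanSpace ℝ (Fin n) =>
            h (a • act g p.1 + b • act g p.2) :=
          hh.comp (((hactg.comp measurable_fst).const_smul a).add
            ((hactg.comp measurable_snd).const_smul b))
        have hm0 : Measurable fun p : EuclideanSpace ℝ (Fin n) × EuclideanSpace ℝ (Fin n) =>
            h (a • act g p.1 + b • p.2) :=
          hh.comp (((hactg.comp measurable_fst).const_smul a).add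
            (measurable_snd.const_smul b))
        have hmT : Measurable fun p : EuclideanSpace ℝ (Fin n) × EuclideanSpace ℝ (Fin n) =>
            h (T p) := hh.comp hTmeas
        calc ∫⁻ p, h (act g (T p)) ∂(ω.prod ω)
            = ∫⁻ u, ∫⁻ v, h (a • act g u + b • act g v) ∂ω ∂ω := by
              simp_rw [hexp]
              exact lintegral_prod _ hm1.aemeasurable
          _ = ∫⁻ u, ∫⁻ v, h (a • act g u + b • v) ∂ω ∂ω := by
              refine lintegral_congr fun u => ?_
              exact step1 g (fun v => h (a • act g u + b • v))
                (hh.comp ((measurable_id.const_smul b).const_add _))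
          _ = ∫⁻ v, ∫⁻ u, h (a • act g u + b • v) ∂ω ∂ω :=
              lintegral_lintegral_swap hm0.aemeasurable
          _ = ∫⁻ v, ∫⁻ u, h (a • u + b • v) ∂ω ∂ω := by
              refine lintegral_congr fun v => ?_
              exact step1 g (fun u => h (a • u + b • v))
                (hh.comp ((measurable_id.const_smul a).add_const _))
          _ = ∫⁻ u, ∫⁻ v, h (a • u + b • v) ∂ω ∂ω :=
              lintegral_lintegral_swap
                (hh.comp ((measurable_snd.const_smul a).add
                  (measurable_fst.const_smul b))).aemeasurable
          _ = ∫⁻ p, h (T p) ∂(ω.prod ω) := (lintegral_prod _ hmT.aemeasurable).symm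
      calc ∫⁻ p, h (T p) ∂(ω.prod ω)
          = ∫⁻ _g, ∫⁻ p, h (T p) ∂(ω.prod ω) ∂γ := by
            rw [lintegral_const, measure_univ, mul_one]
        _ = ∫⁻ g, ∫⁻ p, h (act g (T p)) ∂(ω.prod ω) ∂γ := by
            exact lintegral_congr fun g => (hfix g).symm
        _ = ∫⁻ p, F (T p) ∂(ω.prod ω) := hswap1.symm
    have step4 : ∀ s : ℝ, 0 ≤ s → ∫⁻ θ, h (s • θ) ∂ω = F (s • u₀) := by
      intro s hs
      have e1 : ∫⁻ θ, F (s • θ) ∂ω = ∫⁻ θ, h (s • θ) ∂ω := by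
        have hsw : ∫⁻ θ, F (s • θ) ∂ω = ∫⁻ g, ∫⁻ θ, h (act g (s • θ)) ∂ω ∂γ := by
          simp only [hFdef]
          exact lintegral_lintegral_swap
            (hh.comp (measurable_act.comp
              (measurable_snd.prodMk ((hsmul_meas s).comp measurable_fst)))).aemeasurable
        rw [hsw]
        have hgfix : ∀ g : ↥(Matrix.unitaryGroup (Fin n) ℝ),
            ∫⁻ θ, h (act g (s • θ)) ∂ω = ∫⁻ θ, h (s • θ) ∂ω := by
          intro g
          simp_rw [act_smul]
          exact step1 g (fun x => h (s • x)) (hh.comp (hsmul_meas s))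
        simp_rw [hgfix]
        rw [lintegral_const, measure_univ, mul_one]
      have e2 : ∫⁻ θ, F (s • θ) ∂ω = F (s • u₀) := by
        have hae : ∀ᵐ θ ∂ω, F (s • θ) = F (s • u₀) := by
          filter_upwards [hsphae] with θ hθ
          rw [step3 (s • θ), norm_smul, hθ, mul_one, Real.norm_eq_abs, abs_of_nonneg hs]
        rw [lintegral_congr_ae hae, lintegral_const, measure_univ, mul_one]
      rw [← e1, e2]
    have hlamint : ∀ θ : EuclideanSpace ℝ (Fin n),
        ∫⁻ s, h (s • θ) ∂lam = ∫⁻ p, h (‖T p‖ • θ) ∂(ω.prod ω) := by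
      intro θ
      rw [hlamdef]
      have hm : Measurable fun s : ℝ => h (s • θ) :=
        hh.comp ((continuous_id.smul continuous_const).measurable)
      exact lintegral_map hm hTmeas.norm
    calc ∫⁻ p, h (T p) ∂(ω.prod ω)
        = ∫⁻ p, F (T p) ∂(ω.prod ω) := step2
      _ = ∫⁻ p, F (‖T p‖ • u₀) ∂(ω.prod ω) := lintegral_congr fun p => step3 (T p)
      _ = ∫⁻ p, ∫⁻ θ, h (‖T p‖ • θ) ∂ω ∂(ω.prod ω) :=
          lintegral_congr fun p => (step4 ‖T p‖ (norm_nonneg _)).symm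
      _ = ∫⁻ θ, ∫⁻ p, h (‖T p‖ • θ) ∂(ω.prod ω) ∂ω :=
          lintegral_lintegral_swap
            (hh.comp (((hTmeas.comp measurable_fst).norm).smul measurable_snd)).aemeasurable
      _ = ∫⁻ θ, ∫⁻ s, h (s • θ) ∂lam ∂ω := lintegral_congr fun θ => (hlamint θ).symm
      _ = ∫⁻ q, h (q.2 • q.1) ∂(ω.prod lam) :=
          (lintegral_prod _ (hh.comp (measurable_snd.smul measurable_fst)).aemeasurable).symm
  have hconv : mconvE n (rescaleE n a ω) (rescaleE n b ω) = (ω.prod ω).map T := by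
    unfold mconvE rescaleE
    rw [Measure.map_prod_map _ _ (continuous_const_smul a).measurable
      (continuous_const_smul b).measurable,
      Measure.map_map measurable_add
        ((continuous_const_smul a).measurable.prodMap (continuous_const_smul b).measurable)]
    rfl
  have hS : Measurable fun q : EuclideanSpace ℝ (Fin n) × ℝ => q.2 • q.1 :=
    (continuous_snd.smul continuous_fst).measurable
  rw [hconv]
  unfold mixE
  refine Measure.ext fun A hA => ?_
  rw [Measure.map_apply hTmeas hA, Measure.map_apply hS hA,
    ← lintegral_indicator_one (hTmeas hA), ← lintegral_indicator_one (hS hA)]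
  have h1 := main (A.indicator 1) (measurable_one.indicator hA)
  calc ∫⁻ p, (T ⁻¹' A).indicator 1 p ∂(ω.prod ω)
      = ∫⁻ p, A.indicator 1 (T p) ∂(ω.prod ω) := by
        refine lintegral_congr fun p => ?_
        by_cases hp : T p ∈ A <;>
          simp [Set.indicator, hp, Set.mem_preimage]
    _ = ∫⁻ q, A.indicator 1 (q.2 • q.1) ∂(ω.prod lam) := h1
    _ = ∫⁻ q, ((fun q : EuclideanSpace ℝ (Fin n) × ℝ => q.2 • q.1) ⁻¹' A).indicator 1 q
          ∂(ω.prod lam) := by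
        refine lintegral_congr fun q => ?_
        by_cases hq : q.2 • q.1 ∈ A <;>
          simp [Set.indicator, hq, Set.mem_preimage]

end Stmt19Aux

theorem stmt19 (n : ℕ) (hn : 2 ≤ n)
    (ω : Measure (EuclideanSpace ℝ (Fin n))) (hω : IsProbabilityMeasure ω)
    (hsphere : ω (Metric.sphere (0 : EuclideanSpace ℝ (Fin n)) 1) = 1)
    (hrot : ∀ f : EuclideanSpace ℝ (Fin n) ≃ₗᵢ[ℝ] EuclideanSpace ℝ (Fin n),
      ω.map ⇑f = ω) :
    ∀ a b : ℝ,
      (∃ lam : Measure ℝ, IsProbabilityMeasure lam ∧ lam (Set.Iio 0) = 0 ∧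
        mconvE n (rescaleE n a ω) (rescaleE n b ω) = mixE n ω lam) ∧
      mconvE n (rescaleE n a ω) (rescaleE n b ω)
        = mixE n ω ((ω.prod ω).map (fun p => ‖a • p.1 + b • p.2‖)) := by
  intro a b
  haveI := hω
  have hkey := Stmt19Aux.key (show 0 < n by omega) ω hω hsphere hrot a b
  have hmeas : Measurable fun p : EuclideanSpace ℝ (Fin n) × EuclideanSpace ℝ (Fin n) =>
      ‖a • p.1 + b • p.2‖ :=
    ((continuous_fst.const_smul a).add (continuous_snd.const_smul b)).norm.measurable
  refine ⟨⟨(ω.prod ω).map (fun p => ‖a • p.1 + b • p.2‖), ?_, ?_, hkey⟩, hkey⟩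
  · exact Measure.isProbabilityMeasure_map hmeas.aemeasurable
  · rw [Measure.map_apply hmeas measurableSet_Iio]
    have hempty : (fun p : EuclideanSpace ℝ (Fin n) × EuclideanSpace ℝ (Fin n) =>
        ‖a • p.1 + b • p.2‖) ⁻¹' Set.Iio 0 = ∅ := by
      ext p
      simp [not_lt.2 (norm_nonneg _)]
    rw [hempty, measure_empty]
end
end
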